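/- Assume d i ≥ 2 for all i and 1 ≤ k ≤ n. There is no join prime in Θ_k: for every nonzero subspace S ≤ V there exist nonzero subspaces S₁, S₂ ≤ V such that L_k(S) ≤ L_k(S₁) ∨ L_k(S₂), yet L_k(S) ≰ L_k(S₁) and L_k(S) ≰ L_k(S₂). -/

import Mathlib

/-!
Setup: `n` particles with local dimensions `d : Fin n → ℕ`.
`V d` is the `n`-particle space of functions `(∀ i, Fin (d i)) → ℂ`.
For `J : Finset (Fin n)`, `PConfig d J` is the type of `J`-configurations and
`VJ d J` the corresponding space.  `merge`, `contrL` (the contraction `ψ ↦ ψ_b`),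
the reduced space `red d J S`, the tuple `Lk d S`, the maximal pre-image `MPI`,
and `k`-local frustration-free ground-state spaces are as in the paper.
-/

namespace GSS

variable {n : ℕ}

abbrev Config (d : Fin n → ℕ) : Type := ∀ i : Fin n, Fin (d i)

abbrev V (d : Fin n → ℕ) : Type := Config d → ℂ

abbrev PConfig (d : Fin n → ℕ) (J : Finset (Fin n)) : Type := ∀ i : J, Fin (d i.1)

abbrev VJ (d : Fin n → ℕ) (J : Finset (Fin n)) : Type := PConfig d J → ℂ

/-- The full configuration equal to `a` on `J` and to `b` on `Jᶜ`. -/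
def merge (d : Fin n → ℕ) (J : Finset (Fin n)) (a : PConfig d J) (b : PConfig d Jᶜ) :
    Config d := fun i =>
  if h : i ∈ J then a ⟨i, h⟩ else b ⟨i, Finset.mem_compl.mpr h⟩

/-- The contraction `ψ ↦ ψ_b`, as a linear map from `V d` to `VJ d J`. -/
def contrL (d : Fin n → ℕ) (J : Finset (Fin n)) (b : PConfig d Jᶜ) :
    V d →ₗ[ℂ] VJ d J where
  toFun ψ := fun a => ψ (merge d J a b)
  map_add' _ _ := rfl
  map_smul' _ _ := rfl

/-- The reduced space `red_J(S)`: the span of all contractions `ψ_b` with `ψ ∈ S`. -/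
noncomputable def red (d : Fin n → ℕ) (J : Finset (Fin n)) (S : Submodule ℂ (V d)) :
    Submodule ℂ (VJ d J) :=
  Submodule.span ℂ {φ | ∃ ψ ∈ S, ∃ b : PConfig d Jᶜ, φ = contrL d J b ψ}

/-- The `k`-reduced tuple `L_k(S) = (red_J(S))_J` (only the components with
`J.card = k` are relevant). -/
noncomputable def Lk (d : Fin n → ℕ) (S : Submodule ℂ (V d)) :
    ∀ J : Finset (Fin n), Submodule ℂ (VJ d J) :=
  fun J => red d J S

/-- The maximal pre-image of a tuple `η`:
`{ψ : ψ_b ∈ η_J for every k-element subset J and every Jᶜ-configuration b}`. -/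
noncomputable def MPI (d : Fin n → ℕ) (k : ℕ) (η : ∀ J : Finset (Fin n), Submodule ℂ (VJ d J)) :
    Submodule ℂ (V d) :=
  ⨅ (J : Finset (Fin n)) (_ : J.card = k) (b : PConfig d Jᶜ), (η J).comap (contrL d J b)

/-- `G` is a `k`-local frustration-free ground-state space: `G` is nonzero and is
cut out by a family of subspaces `W_J ≤ V_J` via the contraction conditions. -/
def IsFFGroundSpace (d : Fin n → ℕ) (k : ℕ) (G : Submodule ℂ (V d)) : Prop :=
  G ≠ ⊥ ∧ ∃ W : ∀ J : Finset (Fin n), Submodule ℂ (VJ d J),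
    G = ⨅ (J : Finset (Fin n)) (_ : J.card = k) (b : PConfig d Jᶜ), (W J).comap (contrL d J b)

end GSS

open GSS

namespace GSS

variable {n : ℕ}

def restr (d : Fin n → ℕ) (J : Finset (Fin n)) (x : Config d) : PConfig d J :=
  fun i => x i.1

lemma merge_restr (d : Fin n → ℕ) (J : Finset (Fin n)) (x : Config d) :
    merge d J (restr d J x) (restr d Jᶜ x) = x := by
  funext i; unfold merge restr; split <;> rfl

lemma restr_merge_left (d : Fin n → ℕ) (J : Finset (Fin n)) (a : PConfig d J)
    (b : PConfig d Jᶜ) : restr d J (merge d J a b) = a := by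
  funext i; simp [restr, merge, i.2]

lemma restr_merge_compl (d : Fin n → ℕ) (J : Finset (Fin n)) (a : PConfig d J)
    (b : PConfig d Jᶜ) : restr d Jᶜ (merge d J a b) = b := by
  funext i
  have h : i.1 ∉ J := Finset.mem_compl.mp i.2
  simp [restr, merge, h]

lemma merge_ne_left {d : Fin n → ℕ} {J : Finset (Fin n)} {a a' : PConfig d J}
    {b b' : PConfig d Jᶜ} (h : a ≠ a') : merge d J a b ≠ merge d J a' b' := by
  intro he
  exact h (by rw [← restr_merge_left d J a b, he, restr_merge_left])

lemma merge_ne_compl {d : Fin n → ℕ} {J : Finset (Fin n)} {a a' : PConfig d J}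
    {b b' : PConfig d Jᶜ} (h : b ≠ b') : merge d J a b ≠ merge d J a' b' := by
  intro he
  exact h (by rw [← restr_merge_compl d J a b, he, restr_merge_compl])

/-- Delta function at a configuration. -/
def delta {d : Fin n → ℕ} (x : Config d) : V d :=
  fun y => if y = x then 1 else 0

lemma delta_self {d : Fin n → ℕ} (x : Config d) : delta x x = 1 := by
  simp [delta]

lemma delta_ne {d : Fin n → ℕ} {x y : Config d} (h : y ≠ x) : delta x y = 0 := by
  simp [delta, h]

end GSS


/-- there is no join prime in `Θ_k`. -/
theorem stmt9 (n : ℕ) (hn : 1 ≤ n) (d : Fin n → ℕ) (hd : ∀ i, 2 ≤ d i)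
    (k : ℕ) (hk1 : 1 ≤ k) (hk2 : k ≤ n)
    (S : Submodule ℂ (V d)) (hS : S ≠ ⊥) :
    ∃ S₁ S₂ : Submodule ℂ (V d), S₁ ≠ ⊥ ∧ S₂ ≠ ⊥ ∧
      (∀ J : Finset (Fin n), J.card = k → red d J S ≤ red d J S₁ ⊔ red d J S₂) ∧
      ¬ (∀ J : Finset (Fin n), J.card = k → red d J S ≤ red d J S₁) ∧
      ¬ (∀ J : Finset (Fin n), J.card = k → red d J S ≤ red d J S₂) := by
  classical
  obtain ⟨ψ, hψS, hψ0⟩ := (Submodule.ne_bot_iff S).mp hS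
  obtain ⟨c, hc⟩ : ∃ c, ψ c ≠ 0 := by
    by_contra h; push_neg at h; exact hψ0 (funext h)
  obtain ⟨J₀, -, hJ₀⟩ := Finset.exists_subset_card_eq
    (s := (Finset.univ : Finset (Fin n))) (n := k) (by simpa using hk2)
  have hJ₀ne : J₀.Nonempty := Finset.card_pos.mp (by omega)
  obtain ⟨i₀, hi₀⟩ := hJ₀ne
  have hdi : 2 ≤ d i₀ := hd i₀
  set a₀ : PConfig d J₀ := restr d J₀ c with ha₀def
  set v : Fin (d i₀) :=
    if a₀ ⟨i₀, hi₀⟩ = ⟨0, Nat.lt_of_lt_of_le Nat.zero_lt_two hdi⟩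
    then ⟨1, Nat.lt_of_lt_of_le Nat.one_lt_two hdi⟩
    else ⟨0, Nat.lt_of_lt_of_le Nat.zero_lt_two hdi⟩ with hvdef
  have hv : v ≠ a₀ ⟨i₀, hi₀⟩ := by
    rw [hvdef]
    split_ifs with h
    · rw [h]; intro he; simpa using congrArg Fin.val he
    · exact fun he => h he.symm
  set a₁ : PConfig d J₀ := Function.update a₀ ⟨i₀, hi₀⟩ v with ha₁def
  have ha : a₁ ≠ a₀ := by
    intro h
    apply hv
    rw [← h, ha₁def, Function.update_self]
  let b₀ : PConfig d J₀ᶜ := fun i => ⟨0, Nat.lt_of_lt_of_le Nat.zero_lt_two (hd i.1)⟩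
  set φ₀ : VJ d J₀ := contrL d J₀ (restr d J₀ᶜ c) ψ with hφ₀def
  have hφ₀a₀ : φ₀ a₀ = ψ c := by
    show ψ (merge d J₀ (restr d J₀ c) (restr d J₀ᶜ c)) = ψ c
    rw [merge_restr]
  have hr : φ₀ a₀ ≠ 0 := by rw [hφ₀a₀]; exact hc
  set t : ℂ := if φ₀ a₀ + φ₀ a₁ = 0 then -1 else 1 with htdef
  have ht : t ≠ 0 := by rw [htdef]; split_ifs <;> norm_num
  have hrts : φ₀ a₀ + t * φ₀ a₁ ≠ 0 := by
    rw [htdef]; split_ifs with h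
    · intro he
      have h2r : (2 : ℂ) * φ₀ a₀ = 0 := by linear_combination h + he
      exact hr (by simpa using mul_eq_zero.mp h2r)
    · intro he; apply h; linear_combination he
  let f₁ : VJ d J₀ →ₗ[ℂ] ℂ := LinearMap.proj a₀
  let f₂ : VJ d J₀ →ₗ[ℂ] ℂ := LinearMap.proj a₀ + t • LinearMap.proj a₁
  set S₁ : Submodule ℂ (V d) :=
    ⨅ b : PConfig d J₀ᶜ, (LinearMap.ker f₁).comap (contrL d J₀ b) with hS₁def
  set S₂ : Submodule ℂ (V d) :=
    ⨅ b : PConfig d J₀ᶜ, (LinearMap.ker f₂).comap (contrL d J₀ b) with hS₂def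
  have hmemS₁ : ∀ ψ' : V d, ψ' ∈ S₁ ↔ ∀ b, ψ' (merge d J₀ a₀ b) = 0 := by
    intro ψ'
    rw [hS₁def]
    simp only [Submodule.mem_iInf, Submodule.mem_comap, LinearMap.mem_ker]
    rfl
  have hmemS₂ : ∀ ψ' : V d,
      ψ' ∈ S₂ ↔ ∀ b, ψ' (merge d J₀ a₀ b) + t * ψ' (merge d J₀ a₁ b) = 0 := by
    intro ψ'
    rw [hS₂def]
    simp only [Submodule.mem_iInf, Submodule.mem_comap, LinearMap.mem_ker,
      LinearMap.add_apply, LinearMap.smul_apply, LinearMap.proj_apply, smul_eq_mul]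
    rfl
  refine ⟨S₁, S₂, ?_, ?_, ?_, ?_, ?_⟩
  · rw [Submodule.ne_bot_iff]
    refine ⟨delta (merge d J₀ a₁ b₀), ?_, ?_⟩
    · rw [hmemS₁]
      intro b
      exact delta_ne (merge_ne_left ha.symm)
    · intro h0
      have := congrFun h0 (merge d J₀ a₁ b₀)
      rw [delta_self] at this
      simpa using this
  · rw [Submodule.ne_bot_iff]
    refine ⟨delta (merge d J₀ a₀ b₀) - t⁻¹ • delta (merge d J₀ a₁ b₀), ?_, ?_⟩
    · rw [hmemS₂]
      intro b
      rcases eq_or_ne b b₀ with hb | hb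
      · subst hb
        simp only [Pi.sub_apply, Pi.smul_apply, smul_eq_mul, delta_self,
          delta_ne (merge_ne_left ha.symm), delta_ne (merge_ne_left ha)]
        linear_combination -(mul_inv_cancel₀ ht)
      · simp only [Pi.sub_apply, Pi.smul_apply, smul_eq_mul,
          delta_ne (merge_ne_compl hb), delta_ne (merge_ne_left ha.symm),
          delta_ne (merge_ne_left ha)]
        ring
    · intro h0
      have := congrFun h0 (merge d J₀ a₀ b₀)
      rw [Pi.sub_apply, Pi.smul_apply, delta_self, delta_ne (merge_ne_left ha.symm),
        smul_zero, sub_zero, Pi.zero_apply] at this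
      exact one_ne_zero this
  · intro J hJ
    rw [red, Submodule.span_le]
    rintro φ ⟨ψ', hψ'S, b, rfl⟩
    set p₂ : V d := fun x =>
      if restr d J₀ x = a₀ then ψ' x
      else if restr d J₀ x = a₁ then -t⁻¹ * ψ' (merge d J₀ a₀ (restr d J₀ᶜ x)) else 0
      with hp₂def
    have key : ∀ b' : PConfig d J₀ᶜ,
        p₂ (merge d J₀ a₀ b') = ψ' (merge d J₀ a₀ b') := by
      intro b'
      rw [hp₂def]
      simp only
      rw [if_pos (restr_merge_left d J₀ a₀ b')]
    have key2 : ∀ b' : PConfig d J₀ᶜ,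
        p₂ (merge d J₀ a₁ b') = -t⁻¹ * ψ' (merge d J₀ a₀ b') := by
      intro b'
      rw [hp₂def]
      simp only
      rw [if_neg (by rw [restr_merge_left]; exact ha),
        if_pos (restr_merge_left d J₀ a₁ b'), restr_merge_compl]
    have hp₂ : p₂ ∈ S₂ := by
      rw [hmemS₂]
      intro b'
      rw [key b', key2 b']
      linear_combination (-(ψ' (merge d J₀ a₀ b'))) * mul_inv_cancel₀ ht
    have hp₁ : ψ' - p₂ ∈ S₁ := by
      rw [hmemS₁]
      intro b'
      rw [Pi.sub_apply, key b', sub_self]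
    have hdec : contrL d J b ψ' = contrL d J b (ψ' - p₂) + contrL d J b p₂ := by
      rw [← map_add, sub_add_cancel]
    rw [SetLike.mem_coe, hdec]
    exact Submodule.add_mem _
      (Submodule.mem_sup_left (Submodule.subset_span ⟨ψ' - p₂, hp₁, b, rfl⟩))
      (Submodule.mem_sup_right (Submodule.subset_span ⟨p₂, hp₂, b, rfl⟩))
  · intro hall
    have h := hall J₀ hJ₀
    have hφ₀mem : φ₀ ∈ red d J₀ S :=
      Submodule.subset_span ⟨ψ, hψS, restr d J₀ᶜ c, hφ₀def⟩
    have hle : red d J₀ S₁ ≤ LinearMap.ker f₁ := by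
      rw [red, Submodule.span_le]
      rintro φ ⟨ψ', hψ', b, rfl⟩
      rw [SetLike.mem_coe, LinearMap.mem_ker]
      exact (hmemS₁ ψ').mp hψ' b
    have h0 : f₁ φ₀ = 0 := hle (h hφ₀mem)
    exact hr h0
  · intro hall
    have h := hall J₀ hJ₀
    have hφ₀mem : φ₀ ∈ red d J₀ S :=
      Submodule.subset_span ⟨ψ, hψS, restr d J₀ᶜ c, hφ₀def⟩
    have hle : red d J₀ S₂ ≤ LinearMap.ker f₂ := by
      rw [red, Submodule.span_le]
      rintro φ ⟨ψ', hψ', b, rfl⟩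
      rw [SetLike.mem_coe, LinearMap.mem_ker]
      have := (hmemS₂ ψ').mp hψ' b
      simpa [f₂, contrL, LinearMap.add_apply, LinearMap.smul_apply, LinearMap.proj_apply]
        using this
    have h0 : f₂ φ₀ = 0 := hle (h hφ₀mem)
    apply hrts
    simpa [f₂, LinearMap.add_apply, LinearMap.smul_apply, LinearMap.proj_apply]
      using h0
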